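/- Let n ≥ 1, let F_n be the free group on n generators, and let ρ : F_n → SL(2,ℂ) be a group homomorphism whose image has no common eigenvector. Then the first group cohomology of F_n with coefficients in the adjoint representation Ad∘ρ on sl(2,ℂ) has complex dimension 3n − 3. -/

import Mathlib

open Matrix

/-- `sl(2,ℂ)`: the complex vector space of trace-zero `2 × 2` complex matrices. -/
noncomputable def sl2 : Submodule ℂ (Matrix (Fin 2) (Fin 2) ℂ) :=
  LinearMap.ker (Matrix.traceLinearMap (Fin 2) ℂ ℂ)

open Module

/-- A nonzero trace-zero complex 2×2 matrix has an eigenvector which is a common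
eigenvector for everything commuting with it. -/
lemma sl2_common_eigvec (X : Matrix (Fin 2) (Fin 2) ℂ) (htr : X.trace = 0) (hX : X ≠ 0) :
    ∃ v : Fin 2 → ℂ, v ≠ 0 ∧ ∀ B : Matrix (Fin 2) (Fin 2) ℂ, B * X = X * B →
      ∃ c : ℂ, B *ᵥ v = c • v := by
  set f : End ℂ (Fin 2 → ℂ) := X.mulVecLin with hf
  obtain ⟨μ, hμ⟩ := f.exists_eigenvalue
  obtain ⟨v, hv⟩ := hμ.exists_hasEigenvector
  refine ⟨v, hv.2, ?_⟩
  by_cases hT : f.eigenspace μ = ⊤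
  · exfalso
    have hcol : ∀ i j, X i j = μ * (Pi.single j 1 : Fin 2 → ℂ) i := by
      intro i j
      have hm : (Pi.single j (1:ℂ) : Fin 2 → ℂ) ∈ f.eigenspace μ := hT ▸ Submodule.mem_top
      have h2 := congrFun (Module.End.mem_eigenspace_iff.1 hm) i
      simpa [hf, Matrix.mulVecLin_apply, Matrix.mulVec_single] using h2
    have hμ0 : μ = 0 := by
      have h00 := hcol 0 0
      have h11 := hcol 1 1
      have ht2 : X.trace = X 0 0 + X 1 1 := by
        simp [Matrix.trace, Fin.sum_univ_two, Matrix.diag]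
      rw [htr] at ht2
      simp only [Pi.single_eq_same, mul_one] at h00 h11
      rw [h00, h11] at ht2
      linear_combination -ht2 / 2
    apply hX
    ext i j
    rw [hcol i j, hμ0, zero_mul]
    rfl
  · have hle : Submodule.span ℂ {v} ≤ f.eigenspace μ :=
      (Submodule.span_singleton_le_iff_mem _ _).2 hv.1
    have h1 : finrank ℂ (Submodule.span ℂ {v}) = 1 := finrank_span_singleton hv.2
    have hdim : finrank ℂ (Fin 2 → ℂ) = 2 := by simp
    have h2 : finrank ℂ (f.eigenspace μ) < 2 := by
      have := Submodule.finrank_lt (K := ℂ) (V := Fin 2 → ℂ) hT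
      omega
    have h3 : 1 ≤ finrank ℂ (f.eigenspace μ) := by
      have := Submodule.finrank_mono hle
      rwa [h1] at this
    have hspan : Submodule.span ℂ {v} = f.eigenspace μ :=
      Submodule.eq_of_le_of_finrank_eq hle (by omega)
    intro B hB
    have hmem : B *ᵥ v ∈ f.eigenspace μ := by
      rw [Module.End.mem_eigenspace_iff]
      show X *ᵥ (B *ᵥ v) = μ • (B *ᵥ v)
      rw [Matrix.mulVec_mulVec, ← hB, ← Matrix.mulVec_mulVec]
      have hfv : X *ᵥ v = μ • v := hv.apply_eq_smul
      rw [hfv, Matrix.mulVec_smul]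
    rw [← hspan] at hmem
    obtain ⟨c, hc⟩ := Submodule.mem_span_singleton.1 hmem
    exact ⟨c, hc.symm⟩

lemma finrank_sl2 : finrank ℂ sl2 = 3 := by
  have h := LinearMap.finrank_range_add_finrank_ker (Matrix.traceLinearMap (Fin 2) ℂ ℂ)
  have hr : LinearMap.range (Matrix.traceLinearMap (Fin 2) ℂ ℂ) = ⊤ := by
    rw [LinearMap.range_eq_top]
    intro c
    exact ⟨Matrix.single 0 0 c, by simp [Matrix.traceLinearMap]⟩
  rw [hr] at h
  have h4 : finrank ℂ (Matrix (Fin 2) (Fin 2) ℂ) = 4 :=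
    Module.finrank_eq_of_rank_eq (by rw [rank_matrix'']; norm_num)
  have ht : finrank ℂ (⊤ : Submodule ℂ ℂ) = 1 := by simp
  rw [h4, ht] at h
  have : sl2 = LinearMap.ker (Matrix.traceLinearMap (Fin 2) ℂ ℂ) := rfl
  rw [this]
  omega

section Cocycles

variable {n : ℕ} {M : Type} [AddCommGroup M] [Module ℂ M]
  (σ : Representation ℂ (FreeGroup (Fin n)) M)

/-- The action of the free group on `Multiplicative M` by automorphisms. -/
noncomputable def repAut : FreeGroup (Fin n) →* MulAut (Multiplicative M) where
  toFun g := AddEquiv.toMultiplicative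
    { toFun := σ g
      invFun := σ g⁻¹
      left_inv := fun x => by
        rw [← Module.End.mul_apply, ← _root_.map_mul σ, inv_mul_cancel, _root_.map_one,
          Module.End.one_apply]
      right_inv := fun x => by
        rw [← Module.End.mul_apply, ← _root_.map_mul σ, mul_inv_cancel, _root_.map_one,
          Module.End.one_apply]
      map_add' := map_add _ }
  map_one' := by
    ext x
    simp
  map_mul' g h := by
    ext x
    simp

@[simp] lemma repAut_apply (g : FreeGroup (Fin n)) (x : Multiplicative M) :
    (repAut σ g x).toAdd = σ g x.toAdd := rfl

/-- The homomorphism to the semidirect product determined by `f`. -/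
noncomputable def liftHom (f : Fin n → M) :
    FreeGroup (Fin n) →* Multiplicative M ⋊[repAut σ] FreeGroup (Fin n) :=
  FreeGroup.lift fun i => ⟨Multiplicative.ofAdd (f i), FreeGroup.of i⟩

lemma liftHom_right (f : Fin n → M) (g : FreeGroup (Fin n)) :
    (liftHom σ f g).right = g := by
  have h : (SemidirectProduct.rightHom).comp (liftHom σ f) = MonoidHom.id _ := by
    apply FreeGroup.ext_hom
    intro i
    simp [liftHom]
  exact DFunLike.congr_fun h g

end Cocycles

/-- If `ρ : F_n → SL(2,ℂ)` is a representation of the free group of rank `n ≥ 1` whose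
image has no common eigenvector, then `dim_ℂ H¹(F_n, Ad ∘ ρ) = 3n − 3`, where `Ad ∘ ρ`
is the adjoint action `γ · X = ρ(γ) X ρ(γ)⁻¹` on `sl(2,ℂ)`. -/
theorem dim_H1_adjoint_irreducible
    (n : ℕ) (hn : 1 ≤ n)
    (ρ : FreeGroup (Fin n) →* SpecialLinearGroup (Fin 2) ℂ)
    (hirr : ¬ ∃ v : Fin 2 → ℂ, v ≠ 0 ∧ ∀ γ : FreeGroup (Fin n),
      ∃ c : ℂ, ((ρ γ : SpecialLinearGroup (Fin 2) ℂ) : Matrix (Fin 2) (Fin 2) ℂ) *ᵥ v = c • v)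
    (σ : Representation ℂ (FreeGroup (Fin n)) sl2)
    (hσ : ∀ (γ : FreeGroup (Fin n)) (X : sl2),
      (σ γ X : Matrix (Fin 2) (Fin 2) ℂ)
        = ((ρ γ : SpecialLinearGroup (Fin 2) ℂ) : Matrix (Fin 2) (Fin 2) ℂ)
            * (X : Matrix (Fin 2) (Fin 2) ℂ)
            * (((ρ γ)⁻¹ : SpecialLinearGroup (Fin 2) ℂ) : Matrix (Fin 2) (Fin 2) ℂ)) :
    Module.finrank ℂ (groupCohomology.H1 (Rep.of σ)) = 3 * n - 3 := by
  classical
  set G := FreeGroup (Fin n)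
  set A : Rep ℂ G := Rep.of σ with hA
  -- Step 1: invariants are trivial
  have hinv : σ.invariants = ⊥ := by
    rw [eq_bot_iff]
    intro X hXmem
    rw [Submodule.mem_bot]
    by_contra hX0
    have hXne : (X : Matrix (Fin 2) (Fin 2) ℂ) ≠ 0 := by
      intro h
      exact hX0 (Subtype.ext h)
    have htr : (X : Matrix (Fin 2) (Fin 2) ℂ).trace = 0 := X.2
    obtain ⟨v, hv0, hcom⟩ := sl2_common_eigvec X htr hXne
    apply hirr
    refine ⟨v, hv0, fun γ => ?_⟩
    apply hcom
    -- commutation: ρ γ * X = X * ρ γ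
    have h1 := hσ γ X
    have h2 : σ γ X = X := (Representation.mem_invariants σ X).1 hXmem γ
    rw [h2] at h1
    have hmulinv : ((ρ γ : SpecialLinearGroup (Fin 2) ℂ) : Matrix (Fin 2) (Fin 2) ℂ)
        * (((ρ γ)⁻¹ : SpecialLinearGroup (Fin 2) ℂ) : Matrix (Fin 2) (Fin 2) ℂ) = 1 := by
      rw [← Matrix.SpecialLinearGroup.coe_mul, mul_inv_cancel,
        Matrix.SpecialLinearGroup.coe_one]
    calc ((ρ γ : SpecialLinearGroup (Fin 2) ℂ) : Matrix (Fin 2) (Fin 2) ℂ) * X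
        = ((ρ γ : SpecialLinearGroup (Fin 2) ℂ) : Matrix (Fin 2) (Fin 2) ℂ) * X
            * (((ρ γ)⁻¹ : SpecialLinearGroup (Fin 2) ℂ) : Matrix (Fin 2) (Fin 2) ℂ)
            * ((ρ γ : SpecialLinearGroup (Fin 2) ℂ) : Matrix (Fin 2) (Fin 2) ℂ) := by
          rw [mul_assoc, mul_assoc]
          rw [← Matrix.SpecialLinearGroup.coe_mul, inv_mul_cancel,
            Matrix.SpecialLinearGroup.coe_one, mul_one]
      _ = (X : Matrix (Fin 2) (Fin 2) ℂ)
            * ((ρ γ : SpecialLinearGroup (Fin 2) ℂ) : Matrix (Fin 2) (Fin 2) ℂ) := by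
          rw [← h1]
  -- Step 2: the evaluation equivalence for cocycles
  let eval : groupCohomology.cocycles₁ A →ₗ[ℂ] (Fin n → sl2) :=
    { toFun := fun θ i => (θ : G → sl2) (FreeGroup.of i)
      map_add' := fun θ₁ θ₂ => rfl
      map_smul' := fun c θ => rfl }
  have heval_bij : Function.Bijective eval := by
    constructor
    · rw [injective_iff_map_eq_zero]
      intro θ hθ
      have hz : ∀ g : G, (θ : G → sl2) g = 0 := by
        intro g
        have hg : g ∈ Subgroup.closure (Set.range (FreeGroup.of : Fin n → G)) := by
          rw [FreeGroup.closure_range_of]; trivial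
        induction hg using Subgroup.closure_induction with
        | mem x hx =>
          obtain ⟨i, rfl⟩ := hx
          exact congrFun hθ i
        | one => exact groupCohomology.cocycles₁_map_one θ
        | mul g h _ _ ihg ihh =>
          rw [(groupCohomology.mem_cocycles₁_iff (θ : G → sl2)).1 θ.2 g h, ihg, ihh,
            map_zero, add_zero]
        | inv g _ ih =>
          have h2 := groupCohomology.cocycles₁_map_inv θ g
          rw [ih, neg_zero] at h2
          have h3 : σ g ((θ : G → sl2) g⁻¹) = 0 := h2
          have h4 := congrArg (σ g⁻¹) h3
          rwa [← Module.End.mul_apply, ← _root_.map_mul σ, inv_mul_cancel, _root_.map_one,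
            Module.End.one_apply, map_zero] at h4
      exact Subtype.ext (funext hz)
    · intro f
      have hmem : (fun g => Multiplicative.toAdd (liftHom σ f g).left)
          ∈ groupCohomology.cocycles₁ A := by
        rw [groupCohomology.mem_cocycles₁_iff]
        intro g h
        have hm : liftHom σ f (g * h) = liftHom σ f g * liftHom σ f h :=
          map_mul (liftHom σ f) g h
        have hleft : (liftHom σ f (g * h)).left
            = (liftHom σ f g).left * repAut σ (liftHom σ f g).right (liftHom σ f h).left := by
          rw [hm]; rfl
        show Multiplicative.toAdd (liftHom σ f (g * h)).left
          = σ g (Multiplicative.toAdd (liftHom σ f h).left)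
            + Multiplicative.toAdd (liftHom σ f g).left
        rw [hleft, liftHom_right, toAdd_mul, add_comm]
        rfl
      refine ⟨⟨_, hmem⟩, ?_⟩
      funext i
      show Multiplicative.toAdd (liftHom σ f (FreeGroup.of i)).left = f i
      have hof : liftHom σ f (FreeGroup.of i)
          = ⟨Multiplicative.ofAdd (f i), FreeGroup.of i⟩ := by
        rw [liftHom, FreeGroup.lift_apply_of]
      rw [hof]
      rfl
  let e : groupCohomology.cocycles₁ A ≃ₗ[ℂ] (Fin n → sl2) :=
    LinearEquiv.ofBijective eval heval_bij
  -- Step 3: dimensions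
  have hsl2fd : FiniteDimensional ℂ sl2 := by infer_instance
  haveI hAfd : FiniteDimensional ℂ A := hsl2fd
  have hZfd : FiniteDimensional ℂ (groupCohomology.cocycles₁ A) := e.symm.finiteDimensional
  have hZ : finrank ℂ (groupCohomology.cocycles₁ A) = 3 * n := by
    rw [e.finrank_eq]
    rw [Module.finrank_pi_fintype]
    simp [finrank_sl2, mul_comm]
  -- coboundaries
  let C := (groupCohomology.shortComplexH1 A).moduleCatToCycles
  haveI : FiniteDimensional ℂ (groupCohomology.shortComplexH1 A).X₁ := hAfd
  haveI : FiniteDimensional ℂ (LinearMap.ker (groupCohomology.shortComplexH1 A).g.hom) := hZfd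
  have hB : finrank ℂ (LinearMap.range C) = 3 := by
    have h := LinearMap.finrank_range_add_finrank_ker C
    have hkC : LinearMap.ker C = LinearMap.ker (groupCohomology.shortComplexH1 A).f.hom :=
      LinearMap.ker_codRestrict ..
    rw [hkC] at h
    have hker : LinearMap.ker (groupCohomology.shortComplexH1 A).f.hom = ⊥ := by
      exact (groupCohomology.d₀₁_ker_eq_invariants A).trans hinv
    rw [hker] at h
    have hcarrier : finrank ℂ (groupCohomology.shortComplexH1 A).X₁ = 3 := finrank_sl2
    rw [finrank_bot, add_zero, hcarrier] at h
    exact h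
  have hq := Submodule.finrank_quotient_add_finrank (LinearMap.range C)
  have hZ' : finrank ℂ (LinearMap.ker (groupCohomology.shortComplexH1 A).g.hom) = 3 * n := hZ
  rw [hZ', hB] at hq
  rw [(groupCohomology.H1Iso A).toLinearEquiv.finrank_eq]
  show finrank ℂ (LinearMap.ker (groupCohomology.shortComplexH1 A).g.hom ⧸ LinearMap.range C) = 3 * n - 3
  omega
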